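/- arXiv:1006.5652 — 6 statements merged into one kernel-verified Lean document; each statement's English description precedes it below -/
import Mathlib

section
/- For 0 < q < 1 and every complex number z with |z| < 1/(1-q), the series ∑_{n=0}^∞ z^n/[n]_q! converges and equals the infinite product ∏_{k=0}^∞ (1 - (1-q) q^k z)^{-1}. -/
/-- The q-integer `[k]_q = 1 + q + q^2 + ⋯ + q^(k-1)`. -/
noncomputable def qInt (q : ℝ) (k : ℕ) : ℝ := ∑ i ∈ Finset.range k, q ^ i

/-- The q-factorial `[n]_q! = [1]_q [2]_q ⋯ [n]_q`, with `[0]_q! = 1`. -/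
noncomputable def qFact (q : ℝ) (n : ℕ) : ℝ := ∏ k ∈ Finset.range n, qInt q (k + 1)

section Aux

variable {q : ℝ} (hq0 : 0 < q) (hq1 : q < 1)

lemma one_le_qInt (hq0 : 0 < q) (k : ℕ) : 1 ≤ qInt q (k + 1) := by
  have : (1 : ℝ) = q ^ 0 := by simp
  rw [qInt, this]
  exact Finset.single_le_sum (f := fun i => q ^ i)
    (fun i _ => by positivity) (Finset.mem_range.2 (Nat.succ_pos k))

lemma qInt_mul (hq1 : q < 1) (k : ℕ) : (1 - q) * qInt q k = 1 - q ^ k := by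
  rw [qInt, geom_sum_eq (ne_of_lt hq1)]
  have h : q - 1 ≠ 0 := sub_ne_zero.2 (ne_of_lt hq1)
  field_simp
  ring

lemma qFact_pos (hq0 : 0 < q) (n : ℕ) : 0 < qFact q n := by
  apply Finset.prod_pos
  intro k _
  exact lt_of_lt_of_le one_pos (one_le_qInt hq0 k)

lemma qFact_succ (n : ℕ) : qFact q (n + 1) = qFact q n * qInt q (n + 1) :=
  Finset.prod_range_succ _ _

lemma one_le_qFact (hq0 : 0 < q) (n : ℕ) : 1 ≤ qFact q n := by
  induction n with
  | zero => simp [qFact]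
  | succ n ih =>
    rw [qFact_succ]
    nlinarith [one_le_qInt hq0 n]

lemma qFact_le_succ (hq0 : 0 < q) (n : ℕ) : qFact q n ≤ qFact q (n + 1) := by
  rw [qFact_succ]
  nth_rewrite 1 [← mul_one (qFact q n)]
  exact mul_le_mul_of_nonneg_left (one_le_qInt hq0 n) (qFact_pos hq0 n).le

/-- Summability of the q-exponential series on the disc. -/
lemma qexp_summable (hq0 : 0 < q) (hq1 : q < 1) {w : ℂ} (hw : ‖w‖ < 1 / (1 - q)) :
    Summable (fun n : ℕ => w ^ n / (qFact q n : ℂ)) := by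
  have hq' : (0 : ℝ) < 1 - q := by linarith
  rcases eq_or_ne w 0 with rfl | hw0
  · apply summable_of_ne_finset_zero (s := {0})
    intro n hn
    simp only [Finset.mem_singleton] at hn
    simp [zero_pow hn]
  · have hfact : ∀ n, (qFact q n : ℂ) ≠ 0 := fun n => by
      exact_mod_cast (ne_of_gt (qFact_pos hq0 n))
    apply summable_of_ratio_test_tendsto_lt_one (l := ‖w‖ * (1 - q))
    · rw [lt_div_iff₀ hq'] at hw
      exact hw
    · filter_upwards with n
      exact div_ne_zero (pow_ne_zero n hw0) (hfact n)
    · have h1 : Filter.Tendsto (fun n : ℕ => (1 : ℝ) - q ^ (n + 1)) Filter.atTop (nhds 1) := by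
        have := (tendsto_pow_atTop_nhds_zero_of_lt_one hq0.le hq1).comp
          (Filter.tendsto_add_atTop_nat 1)
        simpa using (tendsto_const_nhds (x := (1 : ℝ))).sub this
      have h2 : Filter.Tendsto (fun n : ℕ => ‖w‖ * (1 - q) / (1 - q ^ (n + 1)))
          Filter.atTop (nhds (‖w‖ * (1 - q))) := by
        have := (tendsto_const_nhds (x := ‖w‖ * (1 - q))).div h1 one_ne_zero
        rw [div_one] at this
        exact this
      apply h2.congr
      intro n
      have hqi : 0 < qInt q (n + 1) := lt_of_lt_of_le one_pos (one_le_qInt hq0 n)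
      have hfn : (0 : ℝ) < qFact q n := qFact_pos hq0 n
      have key : ‖w ^ (n + 1) / (qFact q (n + 1) : ℂ)‖ / ‖w ^ n / (qFact q n : ℂ)‖
          = ‖w‖ / qInt q (n + 1) := by
        rw [norm_div, norm_div, norm_pow, norm_pow, Complex.norm_real, Complex.norm_real,
          Real.norm_of_nonneg (qFact_pos hq0 (n + 1)).le,
          Real.norm_of_nonneg hfn.le, qFact_succ, pow_succ]
        have hwn : (0:ℝ) < ‖w‖ := norm_pos_iff.mpr hw0
        have e1 : ‖w‖ ^ n * ‖w‖ / ‖w‖ ^ n = ‖w‖ := by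
          rw [mul_comm, mul_div_assoc, div_self (pow_pos hwn n).ne', mul_one]
        have e2 : qFact q n * qInt q (n + 1) / qFact q n = qInt q (n + 1) :=
          mul_div_cancel_left₀ _ hfn.ne'
        rw [div_div_div_comm, e1, e2]
      rw [key]
      rw [eq_comm, div_eq_div_iff hqi.ne' (by nlinarith [qInt_mul hq1 (n+1), hqi] : (0:ℝ) < 1 - q ^ (n+1)).ne']
      have h3 := qInt_mul hq1 (n + 1)
      linear_combination (-‖w‖) * h3

end Aux

open Filter in
/-- The functional equation of the q-exponential. -/
lemma qexp_feq {q : ℝ} (hq0 : 0 < q) (hq1 : q < 1) {w : ℂ} (hw : ‖w‖ < 1 / (1 - q)) :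
    (∑' n : ℕ, ((q : ℂ) * w) ^ n / (qFact q n : ℂ))
      = (1 - (1 - (q : ℂ)) * w) * ∑' n : ℕ, w ^ n / (qFact q n : ℂ) := by
  have hq' : (0 : ℝ) < 1 - q := by linarith
  have hqw : ‖(q : ℂ) * w‖ < 1 / (1 - q) := by
    rw [norm_mul, Complex.norm_real, Real.norm_of_nonneg hq0.le]
    nlinarith [norm_nonneg w]
  have h1 := qexp_summable hq0 hq1 hw
  have h2 := qexp_summable hq0 hq1 hqw
  set g : ℕ → ℂ := fun n => (w ^ n - ((q : ℂ) * w) ^ n) / (qFact q n : ℂ) with hg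
  have hgs : Summable g := by
    apply (h1.sub h2).congr
    intro n
    simp [hg, sub_div]
  have hkey : ∀ n : ℕ, g (n + 1) = ((1 - (q : ℂ)) * w) * (w ^ n / (qFact q n : ℂ)) := by
    intro n
    have hfn : ((qFact q n : ℝ) : ℂ) ≠ 0 := by
      exact_mod_cast (qFact_pos hq0 n).ne'
    have hint : ((qInt q (n + 1) : ℝ) : ℂ) ≠ 0 := by
      exact_mod_cast (lt_of_lt_of_le one_pos (one_le_qInt hq0 n)).ne'
    have hF : ((qFact q (n + 1) : ℝ) : ℂ) = (qFact q n : ℂ) * (qInt q (n + 1) : ℂ) := by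
      exact_mod_cast congrArg (Complex.ofReal ·) (qFact_succ (q := q) n)
    have hqm : (1 - (q : ℂ)) * ((qInt q (n + 1) : ℝ) : ℂ) = 1 - (q : ℂ) ^ (n + 1) := by
      exact_mod_cast congrArg (Complex.ofReal ·) (qInt_mul hq1 (n + 1))
    have hnum : w ^ (n + 1) - ((q : ℂ) * w) ^ (n + 1)
        = ((1 - (q : ℂ)) * ((qInt q (n + 1) : ℝ) : ℂ)) * w ^ (n + 1) := by
      linear_combination (-(w ^ (n + 1))) * hqm
    simp only [hg, hF, hnum]
    field_simp
    ring
  have e0 : g 0 = 0 := by simp [hg]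
  have e1 : ∑' n, g n = g 0 + ∑' n, g (n + 1) := Summable.tsum_eq_zero_add hgs
  have e2 : ∑' n, g (n + 1) = ((1 - (q : ℂ)) * w) * ∑' n : ℕ, w ^ n / (qFact q n : ℂ) := by
    rw [tsum_congr hkey, tsum_mul_left]
  have e3 : ∑' n, g n
      = (∑' n : ℕ, w ^ n / (qFact q n : ℂ)) - ∑' n : ℕ, ((q : ℂ) * w) ^ n / (qFact q n : ℂ) := by
    rw [← Summable.tsum_sub h1 h2]
    apply tsum_congr
    intro n
    simp [hg, sub_div]
  rw [e0, zero_add, e2] at e1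
  rw [e1] at e3
  linear_combination e3

lemma qexp_iter {q : ℝ} (hq0 : 0 < q) (hq1 : q < 1) {z : ℂ} (hz : ‖z‖ < 1 / (1 - q)) (N : ℕ) :
    (∑' n : ℕ, ((q : ℂ) ^ N * z) ^ n / (qFact q n : ℂ))
      = (∏ k ∈ Finset.range N, (1 - (1 - (q : ℂ)) * (q : ℂ) ^ k * z))
          * ∑' n : ℕ, z ^ n / (qFact q n : ℂ) := by
  induction N with
  | zero => simp
  | succ N ih =>
    have hqpow : (0:ℝ) ≤ q ^ N ∧ q ^ N ≤ 1 :=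
      ⟨pow_nonneg hq0.le N, pow_le_one₀ hq0.le hq1.le⟩
    have hN : ‖(q : ℂ) ^ N * z‖ < 1 / (1 - q) := by
      rw [norm_mul, norm_pow, Complex.norm_real, Real.norm_of_nonneg hq0.le]
      nlinarith [norm_nonneg z, hqpow.1, hqpow.2]
    have harg : (q : ℂ) ^ (N + 1) * z = (q : ℂ) * ((q : ℂ) ^ N * z) := by ring
    rw [harg, qexp_feq hq0 hq1 hN, ih, Finset.prod_range_succ]
    ring

lemma qexp_sub_one {q : ℝ} (hq0 : 0 < q) (hq1 : q < 1) {z w : ℂ}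
    (hz : ‖z‖ < 1 / (1 - q)) (hw : ‖w‖ ≤ ‖z‖) :
    ‖(∑' n : ℕ, w ^ n / (qFact q n : ℂ)) - 1‖ ≤ ‖w‖ * ∑' n : ℕ, ‖z‖ ^ n / qFact q n := by
  have hw' : ‖w‖ < 1 / (1 - q) := lt_of_le_of_lt hw hz
  have hsum := qexp_summable hq0 hq1 hw'
  have e := Summable.tsum_eq_zero_add hsum
  have hF0 : qFact q 0 = 1 := by simp [qFact]
  rw [show w ^ 0 / (qFact q 0 : ℂ) = 1 by rw [hF0]; simp] at e
  have e' : (∑' n : ℕ, w ^ n / (qFact q n : ℂ)) - 1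
      = ∑' n : ℕ, w ^ (n + 1) / (qFact q (n + 1) : ℂ) := by
    rw [e]; ring
  have hzr : ‖(‖z‖ : ℂ)‖ < 1 / (1 - q) := by
    rw [Complex.norm_real, Real.norm_of_nonneg (norm_nonneg z)]; exact hz
  have hreal : Summable (fun n : ℕ => ‖z‖ ^ n / qFact q n) := by
    apply (qexp_summable hq0 hq1 hzr).norm.congr
    intro n
    rw [norm_div, norm_pow, Complex.norm_real, Real.norm_of_nonneg (norm_nonneg z),
      Complex.norm_real, Real.norm_of_nonneg (qFact_pos hq0 n).le]
  rw [e']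
  apply tsum_of_norm_bounded ((hreal.hasSum.mul_left ‖w‖))
  intro n
  rw [norm_div, norm_pow, Complex.norm_real, Real.norm_of_nonneg (qFact_pos hq0 (n + 1)).le]
  rw [mul_div_assoc', pow_succ, mul_comm (‖w‖ ^ n) ‖w‖]
  apply div_le_div₀ (by positivity) ?_ (qFact_pos hq0 n) (qFact_le_succ hq0 n)
  exact mul_le_mul_of_nonneg_left (pow_le_pow_left₀ (norm_nonneg w) hw n) (norm_nonneg w)

/-- For `0 < q < 1` and `|z| < 1/(1-q)`, the series `∑ z^n/[n]_q!` converges and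
equals the infinite product `∏_{k=0}^∞ (1 - (1-q) q^k z)⁻¹`. -/
theorem eq_exp_series_eq_prod (q : ℝ) (hq0 : 0 < q) (hq1 : q < 1) (z : ℂ)
    (hz : ‖z‖ < 1 / (1 - q)) :
    Summable (fun n : ℕ => z ^ n / (qFact q n : ℂ)) ∧
      (∑' n : ℕ, z ^ n / (qFact q n : ℂ)) =
        ∏' k : ℕ, (1 - (1 - (q : ℂ)) * (q : ℂ) ^ k * z)⁻¹ := by
  have hq' : (0 : ℝ) < 1 - q := by linarith
  have hsum := qexp_summable hq0 hq1 hz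
  refine ⟨hsum, ?_⟩
  set S : ℂ := ∑' n : ℕ, z ^ n / (qFact q n : ℂ) with hS
  set P : ℕ → ℂ := fun N => ∏ k ∈ Finset.range N, (1 - (1 - (q : ℂ)) * (q : ℂ) ^ k * z)
    with hPdef
  set M : ℝ := ∑' n : ℕ, ‖z‖ ^ n / qFact q n with hM
  have hbound : ∀ N : ℕ,
      ‖(∑' n : ℕ, ((q : ℂ) ^ N * z) ^ n / (qFact q n : ℂ)) - 1‖ ≤ q ^ N * (‖z‖ * M) := by
    intro N
    have hwz : ‖(q : ℂ) ^ N * z‖ ≤ ‖z‖ := by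
      rw [norm_mul, norm_pow, Complex.norm_real, Real.norm_of_nonneg hq0.le]
      nlinarith [norm_nonneg z, pow_nonneg hq0.le N, pow_le_one₀ hq0.le hq1.le (n := N)]
    have h := qexp_sub_one hq0 hq1 hz hwz
    rw [norm_mul, norm_pow, Complex.norm_real, Real.norm_of_nonneg hq0.le] at h
    exact le_of_le_of_eq h (by rw [hM]; ring)
  have htend0 : Filter.Tendsto (fun N : ℕ => q ^ N * (‖z‖ * M)) Filter.atTop (nhds 0) := by
    simpa using (tendsto_pow_atTop_nhds_zero_of_lt_one hq0.le hq1).mul_const (‖z‖ * M)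
  have htend1 : Filter.Tendsto (fun N : ℕ => ∑' n : ℕ, ((q : ℂ) ^ N * z) ^ n / (qFact q n : ℂ))
      Filter.atTop (nhds 1) := by
    rw [← tendsto_sub_nhds_zero_iff]
    exact squeeze_zero_norm hbound htend0
  have hPN : ∀ N : ℕ, (∑' n : ℕ, ((q : ℂ) ^ N * z) ^ n / (qFact q n : ℂ)) = P N * S :=
    fun N => qexp_iter hq0 hq1 hz N
  have hSne : S ≠ 0 := by
    intro h0
    have hzero : Filter.Tendsto (fun _ : ℕ => (0 : ℂ)) Filter.atTop (nhds 1) := by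
      refine Filter.Tendsto.congr (fun N => ?_) htend1
      rw [hPN N, h0, mul_zero]
    exact one_ne_zero (tendsto_nhds_unique hzero tendsto_const_nhds)
  have htendP : Filter.Tendsto P Filter.atTop (nhds S⁻¹) := by
    have h := htend1.mul_const S⁻¹
    rw [one_mul] at h
    apply h.congr
    intro N
    rw [hPN N, mul_assoc, mul_inv_cancel₀ hSne, mul_one]
  set a : ℝ := (1 - q) * ‖z‖ with ha
  have ha0 : 0 ≤ a := by positivity
  have ha1 : a < 1 := by
    rw [lt_div_iff₀ hq'] at hz
    rw [ha]; linarith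
  have hfac_norm : ∀ k : ℕ, ‖(1 - (q : ℂ)) * (q : ℂ) ^ k * z‖ = a * q ^ k := by
    intro k
    have h1q : (1 : ℂ) - (q : ℂ) = ((1 - q : ℝ) : ℂ) := by push_cast; ring
    rw [norm_mul, norm_mul, norm_pow, h1q, Complex.norm_real, Complex.norm_real,
      Real.norm_of_nonneg hq'.le, Real.norm_of_nonneg hq0.le, ha]
    ring
  have hfac_le : ∀ k : ℕ, ‖(1 - (q : ℂ)) * (q : ℂ) ^ k * z‖ ≤ a := by
    intro k
    rw [hfac_norm k]
    nlinarith [pow_le_one₀ hq0.le hq1.le (n := k), pow_nonneg hq0.le k]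
  have hne : ∀ k : ℕ, (1 - (1 - (q : ℂ)) * (q : ℂ) ^ k * z) ≠ 0 := by
    intro k h
    rw [sub_eq_zero] at h
    have hn := congrArg norm h
    rw [norm_one] at hn
    have := hfac_le k
    rw [← hn] at this
    linarith
  have hmult : Multipliable (fun k : ℕ => (1 - (1 - (q : ℂ)) * (q : ℂ) ^ k * z)⁻¹) := by
    apply Complex.multipliable_of_summable_log
    apply Summable.of_norm_bounded (g := fun k : ℕ => (1 + (1 - a)⁻¹) * (a * q ^ k))
      (((summable_geometric_of_lt_one hq0.le hq1).mul_left a).mul_left _)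
    intro k
    set u : ℂ := (1 - (q : ℂ)) * (q : ℂ) ^ k * z with hu
    have hunorm : ‖u‖ = a * q ^ k := hfac_norm k
    have hua : ‖u‖ ≤ a := hfac_le k
    have hu1 : ‖u‖ < 1 := lt_of_le_of_lt hua ha1
    have hlog := Complex.norm_log_one_sub_inv_sub_self_le hu1
    have htri : ‖Complex.log (1 - u)⁻¹‖ ≤ ‖Complex.log (1 - u)⁻¹ - u‖ + ‖u‖ := by
      have := norm_add_le (Complex.log (1 - u)⁻¹ - u) u
      simpa using this
    have hinv : (1 - ‖u‖)⁻¹ ≤ (1 - a)⁻¹ := by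
      apply inv_anti₀ (by linarith) (by linarith)
    have hsq : ‖u‖ ^ 2 ≤ ‖u‖ := by nlinarith [norm_nonneg u]
    have hia : (0:ℝ) ≤ (1 - a)⁻¹ := inv_nonneg.2 (by linarith)
    have hmm : ‖u‖ ^ 2 * (1 - ‖u‖)⁻¹ ≤ ‖u‖ * (1 - a)⁻¹ :=
      mul_le_mul hsq hinv (inv_nonneg.2 (by linarith)) (norm_nonneg u)
    rw [← hunorm]
    calc ‖Complex.log (1 - u)⁻¹‖ ≤ ‖Complex.log (1 - u)⁻¹ - u‖ + ‖u‖ := htri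
      _ ≤ ‖u‖ ^ 2 * (1 - ‖u‖)⁻¹ / 2 + ‖u‖ := by linarith
      _ ≤ (1 + (1 - a)⁻¹) * ‖u‖ := by nlinarith [norm_nonneg u, hmm, hia]
  have hprodnat := hmult.hasProd.tendsto_prod_nat
  have hPinv : ∀ N : ℕ,
      ∏ k ∈ Finset.range N, (1 - (1 - (q : ℂ)) * (q : ℂ) ^ k * z)⁻¹ = (P N)⁻¹ := by
    intro N
    rw [hPdef, Finset.prod_inv_distrib]
  have htendPinv : Filter.Tendsto (fun N => (P N)⁻¹) Filter.atTop (nhds S) := by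
    have h := htendP.inv₀ (inv_ne_zero hSne)
    rwa [inv_inv] at h
  exact (tendsto_nhds_unique (Filter.Tendsto.congr (fun N => hPinv N) hprodnat) htendPinv).symm
end

section
/- For 0 < q < 1 and every complex number z, the series ∑_{n=0}^∞ q^{n(n-1)/2} z^n/[n]_q! converges and equals the infinite product ∏_{k=0}^∞ (1 + (1-q) q^k z). -/
open Filter Finset Topology

namespace QExpAux

/-- The general term of the q-exponential series. -/
noncomputable def term (q : ℝ) (w : ℂ) (n : ℕ) : ℂ :=
  (q : ℂ) ^ (n * (n - 1) / 2) * w ^ n / (qFact q n : ℂ)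

variable {q : ℝ}

lemma e_succ (n : ℕ) : (n + 1) * ((n + 1) - 1) / 2 = n * (n - 1) / 2 + n := by
  rw [← Finset.sum_range_id, ← Finset.sum_range_id, Finset.sum_range_succ]

lemma qInt_ge_one (hq0 : 0 < q) (k : ℕ) : 1 ≤ qInt q (k + 1) := by
  have : (q : ℝ) ^ 0 ≤ ∑ i ∈ Finset.range (k + 1), q ^ i :=
    Finset.single_le_sum (f := fun i => q ^ i) (fun i _ => by positivity) (by simp)
  simpa [qInt] using this

lemma qFact_pos (hq0 : 0 < q) (n : ℕ) : 0 < qFact q n :=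
  Finset.prod_pos fun k _ => lt_of_lt_of_le one_pos (qInt_ge_one hq0 k)

lemma qFact_succ (n : ℕ) : qFact q (n + 1) = qFact q n * qInt q (n + 1) :=
  Finset.prod_range_succ _ n

lemma qInt_geom (q : ℝ) (n : ℕ) : (1 - q) * qInt q (n + 1) = 1 - q ^ (n + 1) := by
  have h := geom_sum_mul q (n + 1)
  unfold qInt
  linear_combination -h

lemma term_zero (w : ℂ) : term q w 0 = 1 := by simp [term, qFact]

lemma norm_term (hq0 : 0 < q) (w : ℂ) (n : ℕ) :
    ‖term q w n‖ = q ^ (n * (n - 1) / 2) * ‖w‖ ^ n / qFact q n := by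
  rw [term, norm_div, norm_mul, norm_pow, norm_pow, Complex.norm_real,
    Complex.norm_real, Real.norm_of_nonneg hq0.le,
    Real.norm_of_nonneg (qFact_pos hq0 n).le]

lemma summable_term (hq0 : 0 < q) (hq1 : q < 1) (w : ℂ) : Summable (term q w) := by
  apply summable_of_ratio_norm_eventually_le (r := 1 / 2) (by norm_num)
  have h0 : Tendsto (fun n : ℕ => q ^ n * ‖w‖) atTop (𝓝 0) := by
    simpa using (tendsto_pow_atTop_nhds_zero_of_lt_one hq0.le hq1).mul_const ‖w‖
  filter_upwards [h0.eventually_le_const (by norm_num : (0 : ℝ) < 1 / 2)] with n hn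
  have h1 : ‖term q w (n + 1)‖ = q ^ n * ‖w‖ * ‖term q w n‖ / qInt q (n + 1) := by
    rw [norm_term hq0, norm_term hq0, e_succ, qFact_succ, pow_add, pow_succ]
    have h2 := (qFact_pos hq0 n).ne'
    have h3 := (lt_of_lt_of_le one_pos (qInt_ge_one hq0 n)).ne'
    field_simp
  rw [h1]
  calc q ^ n * ‖w‖ * ‖term q w n‖ / qInt q (n + 1)
      ≤ q ^ n * ‖w‖ * ‖term q w n‖ :=
        div_le_self (by positivity) (qInt_ge_one hq0 n)
    _ ≤ 1 / 2 * ‖term q w n‖ :=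
        mul_le_mul_of_nonneg_right hn (norm_nonneg _)

lemma key (hq0 : 0 < q) (w : ℂ) (n : ℕ) :
    term q w (n + 1) =
      term q ((q : ℂ) * w) (n + 1) + (1 - (q : ℂ)) * w * term q ((q : ℂ) * w) n := by
  have hf : (qFact q n : ℂ) ≠ 0 := by exact_mod_cast (qFact_pos hq0 n).ne'
  have hi : (qInt q (n + 1) : ℂ) ≠ 0 := by
    exact_mod_cast (lt_of_lt_of_le one_pos (qInt_ge_one hq0 n)).ne'
  have hfs : (qFact q (n + 1) : ℂ) = (qFact q n : ℂ) * (qInt q (n + 1) : ℂ) := by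
    rw [qFact_succ]; push_cast; ring
  have hg : (1 - (q : ℂ)) * (qInt q (n + 1) : ℂ) = 1 - (q : ℂ) ^ (n + 1) := by
    exact_mod_cast congrArg (fun x : ℝ => (x : ℂ)) (qInt_geom q n)
  simp only [term, e_succ, pow_add, mul_pow, hfs]
  rw [div_eq_iff (by exact mul_ne_zero hf hi)]
  field_simp
  linear_combination (-((q : ℂ) ^ (n * (n - 1) / 2) * (q : ℂ) ^ n * w ^ n * w)) * hg

lemma FE (hq0 : 0 < q) (hq1 : q < 1) (w : ℂ) :
    (∑' n, term q w n) = (1 + (1 - (q : ℂ)) * w) * ∑' n, term q ((q : ℂ) * w) n := by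
  have hs := summable_term hq0 hq1 w
  have hs' := summable_term hq0 hq1 ((q : ℂ) * w)
  have hs'1 : Summable (fun n => term q ((q : ℂ) * w) (n + 1)) :=
    (summable_nat_add_iff 1).mpr hs'
  have hsm : Summable (fun n => (1 - (q : ℂ)) * w * term q ((q : ℂ) * w) n) :=
    hs'.mul_left _
  rw [Summable.tsum_eq_zero_add hs, term_zero,
    tsum_congr (fun n => key hq0 w n), Summable.tsum_add hs'1 hsm, tsum_mul_left,
    Summable.tsum_eq_zero_add hs', term_zero]
  ring

lemma iter (hq0 : 0 < q) (hq1 : q < 1) (z : ℂ) (N : ℕ) :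
    (∑' n, term q z n) =
      (∏ k ∈ Finset.range N, (1 + (1 - (q : ℂ)) * (q : ℂ) ^ k * z)) *
        ∑' n, term q ((q : ℂ) ^ N * z) n := by
  induction N with
  | zero => simp
  | succ N ih =>
      rw [ih, FE hq0 hq1 ((q : ℂ) ^ N * z), Finset.prod_range_succ,
        show (q : ℂ) * ((q : ℂ) ^ N * z) = (q : ℂ) ^ (N + 1) * z by ring]
      ring

set_option maxHeartbeats 2000000 in
lemma tail_tendsto (hq0 : 0 < q) (hq1 : q < 1) (z : ℂ) :
    Tendsto (fun N : ℕ => ∑' n, term q ((q : ℂ) ^ N * z) n) atTop (𝓝 1) := by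
  have hC : Summable (fun n => ‖term q z (n + 1)‖) :=
    (summable_nat_add_iff 1).mpr (summable_term hq0 hq1 z).norm
  set C := ∑' n, ‖term q z (n + 1)‖ with hCdef
  have hbound : ∀ N : ℕ, ‖(∑' n, term q ((q : ℂ) ^ N * z) n) - 1‖ ≤ q ^ N * C := by
    intro N
    have hsN := summable_term hq0 hq1 ((q : ℂ) ^ N * z)
    have hsN1 : Summable (fun n => term q ((q : ℂ) ^ N * z) (n + 1)) :=
      (summable_nat_add_iff 1).mpr hsN
    rw [Summable.tsum_eq_zero_add hsN, term_zero, add_sub_cancel_left]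
    have hterm : ∀ n : ℕ, ‖term q ((q : ℂ) ^ N * z) (n + 1)‖ ≤ q ^ N * ‖term q z (n + 1)‖ := by
      intro n
      rw [norm_term hq0, norm_term hq0]
      have h1 : ‖(q : ℂ) ^ N * z‖ = q ^ N * ‖z‖ := by
        rw [norm_mul, norm_pow, Complex.norm_real, Real.norm_of_nonneg hq0.le]
      rw [h1]
      have h2 : (q ^ N) ^ (n + 1) ≤ q ^ N := by
        rw [← pow_mul]
        exact pow_le_pow_of_le_one hq0.le hq1.le (Nat.le_mul_of_pos_right N n.succ_pos)
      have h3 : q ^ ((n + 1) * ((n + 1) - 1) / 2) * (q ^ N * ‖z‖) ^ (n + 1) / qFact q (n + 1)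
          = (q ^ N) ^ (n + 1) *
            (q ^ ((n + 1) * ((n + 1) - 1) / 2) * ‖z‖ ^ (n + 1) / qFact q (n + 1)) := by
        ring
      rw [h3]
      apply mul_le_mul_of_nonneg_right h2
      exact div_nonneg (by positivity) (qFact_pos hq0 (n + 1)).le
    calc ‖∑' n, term q ((q : ℂ) ^ N * z) (n + 1)‖
        ≤ ∑' n, ‖term q ((q : ℂ) ^ N * z) (n + 1)‖ := norm_tsum_le_tsum_norm hsN1.norm
      _ ≤ ∑' n, q ^ N * ‖term q z (n + 1)‖ :=
          Summable.tsum_le_tsum hterm hsN1.norm (hC.mul_left _)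
      _ = q ^ N * C := tsum_mul_left
  have h0 : Tendsto (fun N : ℕ => q ^ N * C) atTop (𝓝 0) := by
    simpa using (tendsto_pow_atTop_nhds_zero_of_lt_one hq0.le hq1).mul_const C
  rw [tendsto_iff_norm_sub_tendsto_zero]
  exact squeeze_zero (fun N => norm_nonneg _) hbound h0

end QExpAux

set_option maxHeartbeats 2000000 in
/-- For `0 < q < 1` and every complex `z`, the series `∑ q^(n(n-1)/2) z^n/[n]_q!`
converges and equals the infinite product `∏_{k=0}^∞ (1 + (1-q) q^k z)`. -/
theorem Eq_exp_series_eq_prod (q : ℝ) (hq0 : 0 < q) (hq1 : q < 1) (z : ℂ) :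
    Summable (fun n : ℕ => (q : ℂ) ^ (n * (n - 1) / 2) * z ^ n / (qFact q n : ℂ)) ∧
      (∑' n : ℕ, (q : ℂ) ^ (n * (n - 1) / 2) * z ^ n / (qFact q n : ℂ)) =
        ∏' k : ℕ, (1 + (1 - (q : ℂ)) * (q : ℂ) ^ k * z) := by
  open QExpAux in
  refine ⟨summable_term hq0 hq1 z, ?_⟩
  have htail := QExpAux.tail_tendsto hq0 hq1 z
  -- the partial products tend to the sum of the series
  have hP : Tendsto (fun N => ∏ k ∈ Finset.range N, (1 + (1 - (q : ℂ)) * (q : ℂ) ^ k * z))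
      atTop (𝓝 (∑' n, QExpAux.term q z n)) := by
    have hne : ∀ᶠ N in atTop, (∑' n, QExpAux.term q ((q : ℂ) ^ N * z) n) ≠ 0 :=
      htail.eventually_ne one_ne_zero
    have hdiv : Tendsto
        (fun N => (∑' n, QExpAux.term q z n) / (∑' n, QExpAux.term q ((q : ℂ) ^ N * z) n))
        atTop (𝓝 ((∑' n, QExpAux.term q z n) / 1)) :=
      tendsto_const_nhds.div htail one_ne_zero
    rw [div_one] at hdiv
    refine Filter.Tendsto.congr' ?_ hdiv
    filter_upwards [hne] with N hN
    rw [QExpAux.iter hq0 hq1 z N, mul_div_cancel_right₀ _ hN]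
  have hterm_eq : (fun n : ℕ => (q : ℂ) ^ (n * (n - 1) / 2) * z ^ n / (qFact q n : ℂ))
      = QExpAux.term q z := rfl
  rw [show (∑' n : ℕ, (q : ℂ) ^ (n * (n - 1) / 2) * z ^ n / (qFact q n : ℂ))
      = ∑' n, QExpAux.term q z n from rfl]
  by_cases hzero : ∃ k : ℕ, (1 + (1 - (q : ℂ)) * (q : ℂ) ^ k * z) = 0
  · obtain ⟨k₀, hk₀⟩ := hzero
    have hHP : HasProd (fun k : ℕ => 1 + (1 - (q : ℂ)) * (q : ℂ) ^ k * z) 0 := by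
      rw [HasProd]
      have hev : ∀ᶠ s : Finset ℕ in atTop,
          (∏ k ∈ s, (1 + (1 - (q : ℂ)) * (q : ℂ) ^ k * z)) = 0 := by
        filter_upwards [Filter.eventually_ge_atTop ({k₀} : Finset ℕ)] with s hs
        exact Finset.prod_eq_zero (hs (Finset.mem_singleton_self k₀)) hk₀
      exact Filter.Tendsto.congr' (hev.mono fun s h => h.symm) tendsto_const_nhds
    have hFz : (∑' n, QExpAux.term q z n) = 0 := by
      have h0 : Tendsto (fun N => ∏ k ∈ Finset.range N, (1 + (1 - (q : ℂ)) * (q : ℂ) ^ k * z))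
          atTop (𝓝 0) := by
        refine Filter.Tendsto.congr' ?_ tendsto_const_nhds
        filter_upwards [Filter.eventually_ge_atTop (k₀ + 1)] with N hN
        exact (Finset.prod_eq_zero (Finset.mem_range.mpr hN) hk₀).symm
      exact tendsto_nhds_unique hP h0
    rw [hFz, hHP.tprod_eq]
  · push_neg at hzero
    have hlog : Summable (fun k : ℕ => Complex.log (1 + (1 - (q : ℂ)) * (q : ℂ) ^ k * z)) := by
      apply Summable.of_norm_bounded_eventually_nat
        (g := fun k => 3 / 2 * ((1 - q) * q ^ k * ‖z‖))
      · apply Summable.mul_left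
        apply Summable.mul_right
        exact (summable_geometric_of_lt_one hq0.le hq1).mul_left _
      · have h0 : Tendsto (fun k : ℕ => (1 - q) * q ^ k * ‖z‖) atTop (𝓝 0) := by
          simpa using (((tendsto_pow_atTop_nhds_zero_of_lt_one hq0.le hq1).const_mul
            (1 - q)).mul_const ‖z‖)
        have hev : ∀ᶠ k : ℕ in atTop, (1 - q) * q ^ k * ‖z‖ ≤ 1 / 2 :=
          h0.eventually_le_const (by norm_num : (0 : ℝ) < 1 / 2)
        filter_upwards [hev] with k hk
        have hnorm : ‖(1 - (q : ℂ)) * (q : ℂ) ^ k * z‖ = (1 - q) * q ^ k * ‖z‖ := by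
          rw [norm_mul, norm_mul, norm_pow, Complex.norm_real,
            Real.norm_of_nonneg hq0.le]
          have : ‖1 - (q : ℂ)‖ = 1 - q := by
            rw [show (1 : ℂ) - (q : ℂ) = ((1 - q : ℝ) : ℂ) by push_cast; ring,
              Complex.norm_real, Real.norm_of_nonneg (by linarith)]
          rw [this]
        calc ‖Complex.log (1 + (1 - (q : ℂ)) * (q : ℂ) ^ k * z)‖
            ≤ 3 / 2 * ‖(1 - (q : ℂ)) * (q : ℂ) ^ k * z‖ :=
              Complex.norm_log_one_add_half_le_self (by rw [hnorm]; exact hk)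
          _ = 3 / 2 * ((1 - q) * q ^ k * ‖z‖) := by rw [hnorm]
    have hM : Multipliable (fun k : ℕ => 1 + (1 - (q : ℂ)) * (q : ℂ) ^ k * z) :=
      Complex.multipliable_of_summable_log hlog
    exact tendsto_nhds_unique hP hM.hasProd.tendsto_prod_nat
end

section
/- Let q > 0, q ≠ 1. The radius of convergence of the power series ∑_{n=0}^∞ z^n/{n}_q! equals R_q, where R_q = 2/(1-q) if 0 < q < 1 and R_q = 2q/(q-1) if q > 1. -/
/-- The symbol `{n}_q = 2(1-q^n)/((1-q)(1+q^(n-1)))` (for `n ≥ 1`). -/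
noncomputable def qBrace (q : ℝ) (n : ℕ) : ℝ :=
  2 * (1 - q ^ n) / ((1 - q) * (1 + q ^ (n - 1)))

/-- The factorial `{n}_q! = {1}_q {2}_q ⋯ {n}_q`, with `{0}_q! = 1`. -/
noncomputable def qBraceFact (q : ℝ) (n : ℕ) : ℝ := ∏ k ∈ Finset.range n, qBrace q (k + 1)

/-- The radius `R_q = 2/(1-q)` for `0 < q < 1` and `R_q = 2q/(q-1)` for `q > 1`. -/
noncomputable def Rq (q : ℝ) : ℝ := if q < 1 then 2 / (1 - q) else 2 * q / (q - 1)

open Filter Topology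

lemma qBrace_succ (q : ℝ) (n : ℕ) :
    qBrace q (n + 1) = 2 * (1 - q ^ (n + 1)) / ((1 - q) * (1 + q ^ n)) := by
  simp [qBrace]

lemma Rq_pos {q : ℝ} (hq : 0 < q) (hq1 : q ≠ 1) : 0 < Rq q := by
  rcases lt_or_gt_of_ne hq1 with h | h
  · rw [Rq, if_pos h]; exact div_pos (by norm_num) (by linarith)
  · rw [Rq, if_neg (not_lt.mpr h.le)]
    apply div_pos (by linarith) (by linarith)

lemma qBrace_succ_pos {q : ℝ} (hq : 0 < q) (hq1 : q ≠ 1) (n : ℕ) : 0 < qBrace q (n + 1) := by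
  rw [qBrace_succ]
  have hpow : 0 < q ^ n := pow_pos hq n
  rcases lt_or_gt_of_ne hq1 with h | h
  · have : q ^ (n + 1) < 1 := pow_lt_one₀ hq.le h (Nat.succ_ne_zero n)
    apply div_pos (by linarith) (by nlinarith)
  · have : 1 < q ^ (n + 1) := one_lt_pow₀ h (Nat.succ_ne_zero n)
    apply div_pos_of_neg_of_neg (by linarith) (by nlinarith)

lemma tendsto_qBrace {q : ℝ} (hq : 0 < q) (hq1 : q ≠ 1) :
    Tendsto (fun n => qBrace q (n + 1)) atTop (𝓝 (Rq q)) := by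
  rcases lt_or_gt_of_ne hq1 with h | h
  · have h1 : Tendsto (fun n : ℕ => q ^ n) atTop (𝓝 0) :=
      tendsto_pow_atTop_nhds_zero_of_lt_one hq.le h
    have h2 : Tendsto (fun n : ℕ => q ^ (n + 1)) atTop (𝓝 0) :=
      h1.comp (tendsto_add_atTop_nat 1)
    have hT : Tendsto (fun n => 2 * (1 - q ^ (n + 1)) / ((1 - q) * (1 + q ^ n))) atTop
        (𝓝 (2 * (1 - 0) / ((1 - q) * (1 + 0)))) := by
      apply Tendsto.div
      · exact (tendsto_const_nhds.sub h2).const_mul 2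
      · exact (tendsto_const_nhds.add h1).const_mul (1 - q)
      · simp; intro hc; linarith
    have heq : 2 * (1 - (0:ℝ)) / ((1 - q) * (1 + 0)) = Rq q := by
      rw [Rq, if_pos h]; ring
    simp only [qBrace_succ]
    rwa [heq] at hT
  · have hq0 : q ≠ 0 := ne_of_gt hq
    have key : ∀ n : ℕ, qBrace q (n + 1)
        = 2 * q * (1 - (q⁻¹) ^ (n + 1)) / ((q - 1) * ((q⁻¹) ^ n + 1)) := by
      intro n
      have hpow : 0 < q ^ n := pow_pos hq n
      rw [qBrace_succ, inv_pow, inv_pow, div_eq_div_iff]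
      · field_simp
        ring
      · apply mul_ne_zero (by intro hc; exact absurd hc (by intro hc'; linarith)) (by positivity)
      · apply mul_ne_zero (by intro hc; linarith) (by positivity)
    have hr1 : q⁻¹ < 1 := inv_lt_one_of_one_lt₀ h
    have hr0 : (0:ℝ) ≤ q⁻¹ := by positivity
    have h1 : Tendsto (fun n : ℕ => (q⁻¹) ^ n) atTop (𝓝 0) :=
      tendsto_pow_atTop_nhds_zero_of_lt_one hr0 hr1
    have h2 : Tendsto (fun n : ℕ => (q⁻¹) ^ (n + 1)) atTop (𝓝 0) :=
      h1.comp (tendsto_add_atTop_nat 1)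
    have hT : Tendsto (fun n => 2 * q * (1 - (q⁻¹) ^ (n + 1)) / ((q - 1) * ((q⁻¹) ^ n + 1)))
        atTop (𝓝 (2 * q * (1 - 0) / ((q - 1) * (0 + 1)))) := by
      apply Tendsto.div
      · exact (tendsto_const_nhds.sub h2).const_mul (2 * q)
      · exact (h1.add tendsto_const_nhds).const_mul (q - 1)
      · simp; intro hc; linarith
    have heq : 2 * q * (1 - (0:ℝ)) / ((q - 1) * (0 + 1)) = Rq q := by
      rw [Rq, if_neg (not_lt.mpr h.le)]; ring
    simp only [key]
    rwa [heq] at hT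

lemma qBraceFact_pos {q : ℝ} (hq : 0 < q) (hq1 : q ≠ 1) (n : ℕ) : 0 < qBraceFact q n :=
  Finset.prod_pos fun k _ => qBrace_succ_pos hq hq1 k

/-- The radius of convergence of `∑ z^n/{n}_q!` equals `R_q`: the series converges
for `|z| < R_q` and diverges for `|z| > R_q`. -/
theorem improved_qExp_radius (q : ℝ) (hq : 0 < q) (hq1 : q ≠ 1) :
    (∀ z : ℂ, ‖z‖ < Rq q → Summable (fun n : ℕ => z ^ n / (qBraceFact q n : ℂ))) ∧
    (∀ z : ℂ, Rq q < ‖z‖ → ¬ Summable (fun n : ℕ => z ^ n / (qBraceFact q n : ℂ))) := by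
  have hR : 0 < Rq q := Rq_pos hq hq1
  have hF : ∀ n, 0 < qBraceFact q n := qBraceFact_pos hq hq1
  have hratio : ∀ z : ℂ, z ≠ 0 → Tendsto
      (fun n : ℕ => ‖z ^ (n + 1) / (qBraceFact q (n + 1) : ℂ)‖ / ‖z ^ n / (qBraceFact q n : ℂ)‖)
      atTop (𝓝 (‖z‖ / Rq q)) := by
    intro z hz0
    have hzn : 0 < ‖z‖ := norm_pos_iff.mpr hz0
    have heq : ∀ n : ℕ, ‖z ^ (n + 1) / (qBraceFact q (n + 1) : ℂ)‖ / ‖z ^ n / (qBraceFact q n : ℂ)‖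
        = ‖z‖ / qBrace q (n + 1) := by
      intro n
      have hFn := hF n
      have hB := qBrace_succ_pos hq hq1 n
      have hs : qBraceFact q (n + 1) = qBraceFact q n * qBrace q (n + 1) :=
        Finset.prod_range_succ _ _
      rw [norm_div, norm_div, norm_pow, norm_pow, Complex.norm_real, Complex.norm_real,
        Real.norm_eq_abs, Real.norm_eq_abs, abs_of_pos hFn, abs_of_pos (hF (n + 1)), hs]
      rw [div_div_div_comm, pow_succ, mul_comm (‖z‖ ^ n), mul_div_assoc,
        div_self (pow_ne_zero n hzn.ne'), mul_one, mul_comm (qBraceFact q n), mul_div_assoc,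
        div_self hFn.ne', mul_one]
    simp only [heq]
    exact tendsto_const_nhds.div (tendsto_qBrace hq hq1) hR.ne'
  constructor
  · intro z hz
    by_cases hz0 : z = 0
    · apply summable_of_ne_finset_zero (s := {0})
      intro n hn
      simp at hn
      simp [hz0, zero_pow hn]
    · apply summable_of_ratio_test_tendsto_lt_one (l := ‖z‖ / Rq q)
        ((div_lt_one hR).mpr hz)
        (Eventually.of_forall fun n => div_ne_zero (pow_ne_zero n hz0)
          (Complex.ofReal_ne_zero.mpr (hF n).ne'))
        (hratio z hz0)
  · intro z hz
    have hz0 : z ≠ 0 := by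
      intro hc; rw [hc, norm_zero] at hz; linarith
    exact not_summable_of_ratio_test_tendsto_gt_one ((one_lt_div hR).mpr hz) (hratio z hz0)
end

section
/- Let q > 0, q ≠ 1, and let R_q = 2/(1-q) if 0 < q < 1 and R_q = 2q/(q-1) if q > 1. Then for every real number x with |x| < R_q, the complex number 𝓔_q(ix) = ∑_{n=0}^∞ (ix)^n/{n}_q! has modulus 1, i.e. |𝓔_q(ix)| = 1. -/
/-- The improved q-exponential function `𝓔_q(z) = ∑_{n=0}^∞ z^n/{n}_q!`. -/
noncomputable def impExp (q : ℝ) (z : ℂ) : ℂ := ∑' n : ℕ, z ^ n / (qBraceFact q n : ℂ)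

open Finset Filter Topology

namespace QAux

noncomputable def a (q : ℝ) (n : ℕ) : ℝ := (qBraceFact q n)⁻¹

lemma qBrace_succ (q : ℝ) (k : ℕ) :
    qBrace q (k + 1) = 2 * (1 - q ^ (k + 1)) / ((1 - q) * (1 + q ^ k)) := by
  simp [qBrace]

variable {q : ℝ}

lemma qBrace_pos (hq : 0 < q) (hq1 : q ≠ 1) (k : ℕ) : 0 < qBrace q (k + 1) := by
  rw [qBrace_succ]
  have hpk : 0 < 1 + q ^ k := by positivity
  rcases lt_or_gt_of_ne hq1 with h | h
  · have h1 : q ^ (k + 1) < 1 := pow_lt_one₀ hq.le h (Nat.succ_ne_zero k)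
    apply div_pos <;> nlinarith
  · have h1 : 1 < q ^ (k + 1) := one_lt_pow₀ h (Nat.succ_ne_zero k)
    apply div_pos_of_neg_of_neg <;> nlinarith

lemma qBraceFact_pos (hq : 0 < q) (hq1 : q ≠ 1) (n : ℕ) : 0 < qBraceFact q n :=
  Finset.prod_pos fun k _ => qBrace_pos hq hq1 k

lemma a_pos (hq : 0 < q) (hq1 : q ≠ 1) (n : ℕ) : 0 < a q n :=
  inv_pos.mpr (qBraceFact_pos hq hq1 n)

lemma a_zero (q : ℝ) : a q 0 = 1 := by simp [a, qBraceFact]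

lemma pow_ne_one (hq : 0 < q) (hq1 : q ≠ 1) (n : ℕ) : q ^ (n + 1) ≠ 1 := by
  rcases lt_or_gt_of_ne hq1 with h | h
  · exact ne_of_lt (pow_lt_one₀ hq.le h (Nat.succ_ne_zero n))
  · exact ne_of_gt (one_lt_pow₀ h (Nat.succ_ne_zero n))

lemma a_rec (hq : 0 < q) (hq1 : q ≠ 1) (n : ℕ) :
    (1 - q ^ (n + 1)) * a q (n + 1) = (1 - q) / 2 * ((1 + q ^ n) * a q n) := by
  have hb := qBrace_pos hq hq1 n
  have hf := qBraceFact_pos hq hq1 n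
  have h1 : (1 : ℝ) - q ≠ 0 := sub_ne_zero.mpr (Ne.symm hq1)
  have h2 : (0 : ℝ) < 1 + q ^ n := by positivity
  have h3 : (1 : ℝ) - q ^ (n + 1) ≠ 0 := sub_ne_zero.mpr (Ne.symm (pow_ne_one hq hq1 n))
  unfold a
  rw [qBraceFact, Finset.prod_range_succ, ← qBraceFact, qBrace_succ, mul_inv]
  rw [mul_comm ((qBraceFact q n)⁻¹)]
  field_simp

noncomputable def S (q : ℝ) (n : ℕ) : ℝ :=
  ∑ k ∈ range (n + 1), (-1 : ℝ) ^ k * (a q k * a q (n - k))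

noncomputable def V (q : ℝ) (n : ℕ) : ℝ :=
  ∑ k ∈ range (n + 1), (-1 : ℝ) ^ k * q ^ k * (a q k * a q (n - k))

lemma lemA (hq : 0 < q) (hq1 : q ≠ 1) (n : ℕ) :
    S q (n + 1) - V q (n + 1) = -((1 - q) / 2) * (S q n + V q n) := by
  have expand : S q (n + 1) - V q (n + 1)
      = ∑ k ∈ range (n + 2),
          ((-1 : ℝ) ^ k * (a q k * a q (n + 1 - k))
            - (-1 : ℝ) ^ k * q ^ k * (a q k * a q (n + 1 - k))) := by
    rw [S, V, ← Finset.sum_sub_distrib]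
  rw [expand, Finset.sum_range_succ']
  have h0 : ((-1 : ℝ) ^ 0 * (a q 0 * a q (n + 1 - 0))
      - (-1 : ℝ) ^ 0 * q ^ 0 * (a q 0 * a q (n + 1 - 0))) = 0 := by ring
  rw [h0, add_zero, S, V, ← Finset.sum_add_distrib, Finset.mul_sum]
  refine Finset.sum_congr rfl fun i _ => ?_
  have h := a_rec hq hq1 i
  have hn : n + 1 - (i + 1) = n - i := by omega
  rw [hn]
  linear_combination ((-1 : ℝ) ^ (i + 1) * a q (n - i)) * h

lemma lemB (hq : 0 < q) (hq1 : q ≠ 1) (n : ℕ) :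
    V q (n + 1) - q ^ (n + 1) * S q (n + 1)
      = (1 - q) / 2 * (V q n + q ^ n * S q n) := by
  have expand : V q (n + 1) - q ^ (n + 1) * S q (n + 1)
      = ∑ k ∈ range (n + 2),
          ((-1 : ℝ) ^ k * q ^ k * (a q k * a q (n + 1 - k))
            - q ^ (n + 1) * ((-1 : ℝ) ^ k * (a q k * a q (n + 1 - k)))) := by
    rw [S, V, Finset.mul_sum, ← Finset.sum_sub_distrib]
  rw [expand, Finset.sum_range_succ]
  have hlast : ((-1 : ℝ) ^ (n + 1) * q ^ (n + 1) * (a q (n + 1) * a q (n + 1 - (n + 1)))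
      - q ^ (n + 1) * ((-1 : ℝ) ^ (n + 1) * (a q (n + 1) * a q (n + 1 - (n + 1))))) = 0 := by
    ring
  rw [hlast, add_zero, S, V, Finset.mul_sum, ← Finset.sum_add_distrib, Finset.mul_sum]
  refine Finset.sum_congr rfl fun k hk => ?_
  have hk' : k ≤ n := by simpa [Nat.lt_succ_iff] using Finset.mem_range.mp hk
  have h := a_rec hq hq1 (n - k)
  have e1 : n + 1 - k = (n - k) + 1 := by omega
  have hp1 : q ^ (n + 1) = q ^ k * q ^ (n - k) * q := by
    rw [mul_assoc, ← pow_succ, ← pow_add]; congr 1; omega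
  have hp2 : q ^ n = q ^ k * q ^ (n - k) := by
    rw [← pow_add]; congr 1; omega
  rw [e1, hp1, hp2]
  linear_combination ((-1 : ℝ) ^ k * q ^ k * a q k) * h

lemma S_rel (hq : 0 < q) (hq1 : q ≠ 1) (n : ℕ) :
    (1 - q ^ (n + 1)) * S q (n + 1) = (1 - q) / 2 * (q ^ n - 1) * S q n := by
  linear_combination lemA hq hq1 n + lemB hq hq1 n

lemma S_eq_zero (hq : 0 < q) (hq1 : q ≠ 1) : ∀ n, 1 ≤ n → S q n = 0 := by
  intro n hn
  induction n with
  | zero => omega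
  | succ m ih =>
    have hrel := S_rel hq hq1 m
    have hne : (1 : ℝ) - q ^ (m + 1) ≠ 0 :=
      sub_ne_zero.mpr (Ne.symm (pow_ne_one hq hq1 m))
    have h0 : (1 - q) / 2 * (q ^ m - 1) * S q m = 0 := by
      rcases Nat.eq_zero_or_pos m with rfl | hm
      · simp
      · rw [ih hm, mul_zero]
    rw [h0] at hrel
    exact (mul_eq_zero.mp hrel).resolve_left hne

lemma S_reflect (q : ℝ) (n : ℕ) :
    ∑ k ∈ range (n + 1), (-1 : ℝ) ^ (n - k) * (a q k * a q (n - k)) = S q n := by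
  rw [← Finset.sum_range_reflect]
  refine Finset.sum_congr rfl fun k hk => ?_
  have hk' : k ≤ n := by simpa [Nat.lt_succ_iff] using Finset.mem_range.mp hk
  have e1 : n + 1 - 1 - k = n - k := by omega
  have e2 : n - (n - k) = k := by omega
  rw [e1, e2, mul_comm (a q (n - k))]

lemma Rq_pos (hq : 0 < q) (hq1 : q ≠ 1) : 0 < Rq q := by
  rcases lt_or_gt_of_ne hq1 with h | h
  · rw [Rq, if_pos h]
    have : (0:ℝ) < 1 - q := by linarith
    positivity
  · rw [Rq, if_neg (not_lt.mpr h.le)]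
    apply div_pos <;> linarith

lemma tendsto_qBrace (hq : 0 < q) (hq1 : q ≠ 1) :
    Tendsto (fun n => qBrace q (n + 1)) atTop (𝓝 (Rq q)) := by
  rcases lt_or_gt_of_ne hq1 with h | h
  · have hpow : Tendsto (fun n : ℕ => q ^ n) atTop (𝓝 0) :=
      tendsto_pow_atTop_nhds_zero_of_lt_one hq.le h
    have hpow1 : Tendsto (fun n : ℕ => q ^ (n + 1)) atTop (𝓝 0) := by
      simpa [pow_succ] using hpow.mul_const q
    have hc1 : Tendsto (fun _ : ℕ => (1 : ℝ)) atTop (𝓝 1) := tendsto_const_nhds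
    have hnum : Tendsto (fun n : ℕ => 2 * (1 - q ^ (n + 1))) atTop (𝓝 2) := by
      simpa using (hc1.sub hpow1).const_mul (2 : ℝ)
    have hden : Tendsto (fun n : ℕ => (1 - q) * (1 + q ^ n)) atTop (𝓝 (1 - q)) := by
      simpa using (hc1.add hpow).const_mul (1 - q)
    have hne : (1 : ℝ) - q ≠ 0 := sub_ne_zero.mpr (Ne.symm hq1)
    have := hnum.div hden hne
    simp only [qBrace_succ]
    convert this using 2
    · rfl
    rw [Rq, if_pos h]
  · have hq0 : q ≠ 0 := ne_of_gt hq
    have hinv : |q⁻¹| < 1 := by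
      rw [abs_of_pos (inv_pos.mpr hq)]
      exact inv_lt_one_of_one_lt₀ h
    have hpow : Tendsto (fun n : ℕ => (q⁻¹) ^ n) atTop (𝓝 0) :=
      tendsto_pow_atTop_nhds_zero_of_abs_lt_one hinv
    have hrw : ∀ n : ℕ, qBrace q (n + 1)
        = 2 * ((q⁻¹) ^ n - q) / ((1 - q) * ((q⁻¹) ^ n + 1)) := by
      intro n
      have hqn : q ^ n ≠ 0 := pow_ne_zero _ hq0
      have hne : (1 : ℝ) - q ≠ 0 := sub_ne_zero.mpr (Ne.symm hq1)
      have hpk : (0 : ℝ) < 1 + q ^ n := by positivity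
      rw [qBrace_succ, inv_pow, div_eq_div_iff (by positivity) ?_]
      · field_simp
        ring
      · have : (0 : ℝ) < (q ^ n)⁻¹ + 1 := by positivity
        intro hcon
        rcases mul_eq_zero.mp hcon with h' | h'
        · exact hne h'
        · exact ne_of_gt this h'
    have hnum : Tendsto (fun n : ℕ => 2 * ((q⁻¹) ^ n - q)) atTop (𝓝 (2 * (0 - q))) :=
      (hpow.sub tendsto_const_nhds).const_mul 2
    have hden : Tendsto (fun n : ℕ => (1 - q) * ((q⁻¹) ^ n + 1))
        atTop (𝓝 ((1 - q) * (0 + 1))) :=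
      (hpow.add tendsto_const_nhds).const_mul (1 - q)
    have hdne : (1 - q) * ((0 : ℝ) + 1) ≠ 0 := by
      simp [sub_ne_zero.mpr (Ne.symm hq1)]
    have := hnum.div hden hdne
    simp only [hrw]
    convert this using 2
    · rfl
    rw [Rq, if_neg (not_lt.mpr h.le)]
    rw [div_eq_div_iff (by linarith) (by simpa using sub_ne_zero.mpr (Ne.symm hq1))]
    ring

lemma summable_norm_term (hq : 0 < q) (hq1 : q ≠ 1) {z : ℂ}
    (hz : ‖z‖ < Rq q) (hz0 : z ≠ 0) :
    Summable fun n => ‖z ^ n / ((qBraceFact q n : ℝ) : ℂ)‖ := by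
  have hR := Rq_pos hq hq1
  have hfn : ∀ n, ‖z ^ n / ((qBraceFact q n : ℝ) : ℂ)‖ = ‖z‖ ^ n / qBraceFact q n := by
    intro n
    rw [norm_div, norm_pow, Complex.norm_real, Real.norm_eq_abs,
      abs_of_pos (qBraceFact_pos hq hq1 n)]
  apply summable_of_ratio_test_tendsto_lt_one (l := ‖z‖ / Rq q)
  · rw [div_lt_one hR]; exact hz
  · filter_upwards with n
    rw [hfn]
    have hz' : 0 < ‖z‖ := norm_pos_iff.mpr hz0
    have hf' := qBraceFact_pos hq hq1 n
    positivity
  · have hrat : ∀ n : ℕ, ‖‖z ^ (n + 1) / ((qBraceFact q (n + 1) : ℝ) : ℂ)‖‖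
        / ‖‖z ^ n / ((qBraceFact q n : ℝ) : ℂ)‖‖ = ‖z‖ / qBrace q (n + 1) := by
      intro n
      rw [Real.norm_of_nonneg (norm_nonneg _), Real.norm_of_nonneg (norm_nonneg _),
        hfn, hfn]
      have h1 : qBraceFact q (n + 1) = qBraceFact q n * qBrace q (n + 1) := by
        rw [qBraceFact, Finset.prod_range_succ, ← qBraceFact]
      rw [h1, pow_succ]
      have hb := (qBrace_pos hq hq1 n).ne'
      have hf := (qBraceFact_pos hq hq1 n).ne'
      have hzn : ‖z‖ ^ n ≠ 0 := pow_ne_zero _ (norm_ne_zero_iff.mpr hz0)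
      have key : ∀ A B C : ℝ, A ≠ 0 → B ≠ 0 → C ≠ 0 →
          A * ‖z‖ / (B * C) / (A / B) = ‖z‖ / C := by
        intro A B C hA hB hC
        field_simp
      exact key _ _ _ hzn hf hb
    simp only [hrat]
    exact tendsto_const_nhds.div (tendsto_qBrace hq hq1) (ne_of_gt hR)

lemma inner_eq (hq : 0 < q) (hq1 : q ≠ 1) (w : ℂ) (n : ℕ) :
    ∑ k ∈ Finset.range (n + 1),
        (w ^ k / ((qBraceFact q k : ℝ) : ℂ)) * ((-w) ^ (n - k) / ((qBraceFact q (n - k) : ℝ) : ℂ))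
      = w ^ n * ((∑ k ∈ Finset.range (n + 1), (-1 : ℝ) ^ (n - k) * (a q k * a q (n - k)) : ℝ) : ℂ) := by
  push_cast
  rw [Finset.mul_sum]
  refine Finset.sum_congr rfl fun k hk => ?_
  have hk' : k ≤ n := by simpa [Nat.lt_succ_iff] using Finset.mem_range.mp hk
  have hw : w ^ k * w ^ (n - k) = w ^ n := by rw [← pow_add]; congr 1; omega
  have hfk : ((qBraceFact q k : ℝ) : ℂ) ≠ 0 := by
    exact_mod_cast ne_of_gt (qBraceFact_pos hq hq1 k)
  have hfnk : ((qBraceFact q (n - k) : ℝ) : ℂ) ≠ 0 := by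
    exact_mod_cast ne_of_gt (qBraceFact_pos hq hq1 (n - k))
  rw [neg_pow, ← hw]
  simp only [a]
  push_cast
  field_simp

lemma impExp_zero (q : ℝ) : impExp q 0 = 1 := by
  rw [impExp, tsum_eq_single 0]
  · simp [qBraceFact]
  · intro n hn; simp [zero_pow hn]

lemma impExp_mul_impExp_neg (hq : 0 < q) (hq1 : q ≠ 1) {w : ℂ}
    (hw : ‖w‖ < Rq q) (hw0 : w ≠ 0) :
    impExp q w * impExp q (-w) = 1 := by
  have h1 := summable_norm_term hq hq1 hw hw0
  have h2 : Summable fun n => ‖(-w) ^ n / ((qBraceFact q n : ℝ) : ℂ)‖ := by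
    apply summable_norm_term hq hq1 _ (neg_ne_zero.mpr hw0)
    rwa [norm_neg]
  rw [impExp, impExp, tsum_mul_tsum_eq_tsum_sum_range_of_summable_norm h1 h2]
  rw [tsum_eq_single 0]
  · simp [qBraceFact]
  · intro n hn
    have hn1 : 1 ≤ n := Nat.one_le_iff_ne_zero.mpr hn
    rw [inner_eq hq hq1 w n, S_reflect, S_eq_zero hq hq1 n hn1]
    simp

lemma conj_impExp (q : ℝ) (w : ℂ) :
    (starRingEnd ℂ) (impExp q w) = impExp q ((starRingEnd ℂ) w) := by
  rw [impExp, impExp, Complex.conj_tsum]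
  congr 1
  funext n
  rw [map_div₀, map_pow, Complex.conj_ofReal]

end QAux


/-- For real `x` with `|x| < R_q`, `|𝓔_q(ix)| = 1`. -/
theorem abs_impExp_I_mul (q : ℝ) (hq : 0 < q) (hq1 : q ≠ 1) (x : ℝ)
    (hx : |x| < Rq q) : ‖impExp q (Complex.I * x)‖ = 1 := by
  by_cases hx0 : x = 0
  · subst hx0
    norm_num [QAux.impExp_zero]
  · set w : ℂ := Complex.I * x with hwdef
    set e : ℂ := impExp q w with hedef
    have hwn : ‖w‖ = |x| := by
      rw [hwdef, norm_mul, Complex.norm_I, Complex.norm_real, Real.norm_eq_abs, one_mul]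
    have hw0 : w ≠ 0 := by
      rw [hwdef]
      simp [Complex.I_ne_zero, Complex.ofReal_ne_zero.mpr hx0]
    have hwlt : ‖w‖ < Rq q := by rw [hwn]; exact hx
    have hconjw : (starRingEnd ℂ) w = -w := by
      rw [hwdef, map_mul, Complex.conj_I, Complex.conj_ofReal]
      ring
    have hconj : (starRingEnd ℂ) e = impExp q (-w) := by
      rw [hedef, QAux.conj_impExp, hconjw]
    have hmul : e * (starRingEnd ℂ) e = 1 := by
      rw [hconj, hedef]
      exact QAux.impExp_mul_impExp_neg hq hq1 hwlt hw0
    have hnsq : (Complex.normSq e : ℂ) = 1 := by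
      rw [← Complex.mul_conj, hmul]
    have hnsq' : Complex.normSq e = 1 := by exact_mod_cast hnsq
    have hsq : ‖e‖ ^ 2 = 1 := by rw [Complex.sq_norm, hnsq']
    have hpos : 0 ≤ ‖e‖ := norm_nonneg _
    nlinarith [hsq, hpos]
end

section
/- For every q > 0 with q ≠ 1 and every natural number n ≥ 1, one has {n}_q = {n}_{1/q}, i.e. 2(1-q^n)/((1-q)(1+q^{n-1})) = 2(1-q^{-n})/((1-q^{-1})(1+q^{-(n-1)})); consequently {n}_q! = {n}_{1/q}! for all n, and hence the power series ∑_{n=0}^∞ z^n/{n}_q! and ∑_{n=0}^∞ z^n/{n}_{1/q}! are identical, so 𝓔_q = 𝓔_{1/q}. -/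
/-- `{n}_q = {n}_{1/q}` for `n ≥ 1`, hence `{n}_q! = {n}_{1/q}!` for all `n`, the two
power series have identical terms, and `𝓔_q = 𝓔_{1/q}`. -/
theorem qBrace_inv (q : ℝ) (hq : 0 < q) (hq1 : q ≠ 1) :
    (∀ n : ℕ, 1 ≤ n → qBrace q n = qBrace (1 / q) n) ∧
    (∀ n : ℕ, qBraceFact q n = qBraceFact (1 / q) n) ∧
    (∀ z : ℂ, ∀ n : ℕ, z ^ n / (qBraceFact q n : ℂ) = z ^ n / (qBraceFact (1 / q) n : ℂ)) ∧
    impExp q = impExp (1 / q) := by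
  have hq0 : q ≠ 0 := ne_of_gt hq
  have h1 : ∀ n : ℕ, 1 ≤ n → qBrace q n = qBrace (1 / q) n := by
    intro n hn
    obtain ⟨m, rfl⟩ := Nat.exists_eq_add_of_le hn
    unfold qBrace
    simp only [Nat.add_sub_cancel_left, div_pow, one_pow]
    have hqm : q ^ m ≠ 0 := pow_ne_zero _ hq0
    have hqm1 : q ^ (1 + m) ≠ 0 := pow_ne_zero _ hq0
    have hden : (1 - q) * (1 + q ^ m) ≠ 0 := by
      apply mul_ne_zero (sub_ne_zero.mpr (Ne.symm hq1))
      positivity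
    have hq1' : (1 : ℝ) - 1 / q ≠ 0 := by
      rw [sub_ne_zero]
      intro h
      exact hq1 (by field_simp at h; linarith)
    have hden' : (1 - 1 / q) * (1 + 1 / q ^ m) ≠ 0 := by
      apply mul_ne_zero hq1'
      positivity
    rw [div_eq_div_iff hden hden']
    field_simp
    ring
  have h2 : ∀ n : ℕ, qBraceFact q n = qBraceFact (1 / q) n := by
    intro n
    unfold qBraceFact
    exact Finset.prod_congr rfl fun k _ => h1 (k + 1) (Nat.le_add_left 1 k)
  have h3 : ∀ z : ℂ, ∀ n : ℕ, z ^ n / (qBraceFact q n : ℂ) = z ^ n / (qBraceFact (1 / q) n : ℂ) := by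
    intro z n; rw [h2]
  refine ⟨h1, h2, h3, ?_⟩
  funext z
  unfold impExp
  exact tsum_congr fun n => h3 z n
end

section
/- Let q > 0, q ≠ 1, and R_q = 2/(1-q) if 0 < q < 1, R_q = 2q/(q-1) if q > 1. Define Sin_q(x) = (𝓔_q(ix) − 𝓔_q(−ix))/(2i) and Cos_q(x) = (𝓔_q(ix) + 𝓔_q(−ix))/2 for real x with |x| < R_q, where 𝓔_q(z) = ∑_{n=0}^∞ z^n/{n}_q!. Then the Pythagorean identity holds: (Cos_q(x))² + (Sin_q(x))² = 1 for all real x with |x| < R_q. -/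
/-- The improved q-sine `Sin_q(x) = (𝓔_q(ix) − 𝓔_q(−ix))/(2i)`. -/
noncomputable def impSin (q : ℝ) (x : ℝ) : ℂ :=
  (impExp q (Complex.I * x) - impExp q (-(Complex.I * x))) / (2 * Complex.I)

/-- The improved q-cosine `Cos_q(x) = (𝓔_q(ix) + 𝓔_q(−ix))/2`. -/
noncomputable def impCos (q : ℝ) (x : ℝ) : ℂ :=
  (impExp q (Complex.I * x) + impExp q (-(Complex.I * x))) / 2

open Finset

namespace ImpPyth

noncomputable def qnum (q : ℝ) (n : ℕ) : ℝ := ∑ i ∈ Finset.range n, q ^ i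
noncomputable def qfact (q : ℝ) (n : ℕ) : ℝ := ∏ k ∈ Finset.range n, qnum q (k + 1)
noncomputable def pp (q : ℝ) (n : ℕ) : ℝ := ∏ k ∈ Finset.range n, (1 + q ^ k)

variable {q : ℝ}

lemma qnum_pos (hq : 0 < q) (n : ℕ) : 0 < qnum q (n + 1) :=
  Finset.sum_pos (fun i _ => pow_pos hq i) (by simp)

lemma qnum_ne (hq : 0 < q) (n : ℕ) : qnum q (n + 1) ≠ 0 := (qnum_pos hq n).ne'

lemma qfact_pos (hq : 0 < q) (n : ℕ) : 0 < qfact q n :=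
  Finset.prod_pos fun i _ => qnum_pos hq i

lemma qfact_ne (hq : 0 < q) (n : ℕ) : qfact q n ≠ 0 := (qfact_pos hq n).ne'

lemma pp_pos (hq : 0 < q) (n : ℕ) : 0 < pp q n :=
  Finset.prod_pos fun i _ => by positivity

lemma pp_ne (hq : 0 < q) (n : ℕ) : pp q n ≠ 0 := (pp_pos hq n).ne'

lemma one_add_pow_ne (hq : 0 < q) (n : ℕ) : (1 : ℝ) + q ^ n ≠ 0 := by positivity

lemma qnum_split (k n : ℕ) (h : k ≤ n) :
    qnum q n = qnum q k + q ^ k * qnum q (n - k) := by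
  have h' : k + (n - k) = n := Nat.add_sub_cancel' h
  calc qnum q n = ∑ x ∈ Finset.range (k + (n - k)), q ^ x := by rw [h', qnum]
    _ = ∑ x ∈ Finset.range k, q ^ x + ∑ i ∈ Finset.range (n - k), q ^ (k + i) :=
        Finset.sum_range_add _ _ _
    _ = qnum q k + q ^ k * qnum q (n - k) := by
        rw [qnum, qnum, Finset.mul_sum]
        congr 1
        exact Finset.sum_congr rfl fun i _ => pow_add q k i

lemma qBrace_eq (hq1 : q ≠ 1) (k : ℕ) :
    qBrace q (k + 1) = 2 * qnum q (k + 1) / (1 + q ^ k) := by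
  have h1q : (1 : ℝ) - q ≠ 0 := sub_ne_zero.mpr (Ne.symm hq1)
  have hg : (1 : ℝ) - q ^ (k + 1) = (1 - q) * qnum q (k + 1) := by
    have := geom_sum_mul q (k + 1)
    rw [qnum]
    nlinarith [this]
  rw [qBrace, show k + 1 - 1 = k from rfl, hg,
    show 2 * ((1 - q) * qnum q (k + 1)) = (1 - q) * (2 * qnum q (k + 1)) from by ring,
    mul_div_mul_left _ _ h1q]

lemma pp_mul_fact (hq : 0 < q) (hq1 : q ≠ 1) :
    ∀ n, pp q n * qBraceFact q n = 2 ^ n * qfact q n := by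
  intro n
  induction n with
  | zero => simp [pp, qBraceFact, qfact]
  | succ n ih =>
    rw [pp, qBraceFact, qfact, Finset.prod_range_succ, Finset.prod_range_succ,
      Finset.prod_range_succ, ← pp, ← qBraceFact, ← qfact, qBrace_eq hq1]
    have h := one_add_pow_ne hq n
    field_simp
    linear_combination (2 * qnum q (n+1)) * ih

lemma braceFact_eq (hq : 0 < q) (hq1 : q ≠ 1) (n : ℕ) :
    qBraceFact q n = 2 ^ n * qfact q n / pp q n := by
  rw [eq_div_iff (pp_ne hq n), mul_comm]
  exact pp_mul_fact hq hq1 n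

lemma braceFact_pos (hq : 0 < q) (hq1 : q ≠ 1) (n : ℕ) : 0 < qBraceFact q n := by
  rw [braceFact_eq hq hq1]
  have := qfact_pos hq n; have := pp_pos hq n; positivity

lemma braceFact_ne (hq : 0 < q) (hq1 : q ≠ 1) (n : ℕ) : qBraceFact q n ≠ 0 :=
  (braceFact_pos hq hq1 n).ne'

/-- The convolution sum. -/
noncomputable def Dsum (q : ℝ) (n : ℕ) : ℝ :=
  ∑ k ∈ Finset.range (n + 1),
    (-1 : ℝ) ^ k * (pp q k * pp q (n - k)) * ((qfact q k)⁻¹ * (qfact q (n - k))⁻¹)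

lemma Dsum_zero : Dsum q 0 = 1 := by simp [Dsum, pp, qfact]

lemma key_rec (hq : 0 < q) (m : ℕ) :
    qnum q (m + 1) * Dsum q (m + 1) = (q ^ m - 1) * Dsum q m := by
  classical
  set A : ℕ → ℝ := fun k =>
    (-1 : ℝ) ^ k * (pp q k * pp q (m + 1 - k)) * qnum q k *
      ((qfact q k)⁻¹ * (qfact q (m + 1 - k))⁻¹) with hA
  set B : ℕ → ℝ := fun k =>
    (-1 : ℝ) ^ k * (pp q k * pp q (m + 1 - k)) * (q ^ k * qnum q (m + 1 - k)) *
      ((qfact q k)⁻¹ * (qfact q (m + 1 - k))⁻¹) with hB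
  have hsplit : qnum q (m + 1) * Dsum q (m + 1)
      = ∑ k ∈ Finset.range (m + 2), (A k + B k) := by
    rw [Dsum, Finset.mul_sum]
    refine Finset.sum_congr rfl fun k hk => ?_
    have hk' : k ≤ m + 1 := Nat.lt_succ_iff.mp (Finset.mem_range.mp hk)
    rw [qnum_split k (m + 1) hk', hA, hB]
    ring
  rw [hsplit, Finset.sum_add_distrib, Finset.sum_range_succ' (fun k => A k) (m + 1),
    Finset.sum_range_succ (fun k => B k) (m + 1)]
  have hA0 : A 0 = 0 := by simp [hA, qnum]
  have hBtop : B (m + 1) = 0 := by simp [hB, qnum]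
  rw [hA0, hBtop, add_zero, add_zero, ← Finset.sum_add_distrib, Dsum, Finset.mul_sum]
  refine Finset.sum_congr rfl fun k hk => ?_
  have hk' : k ≤ m := Nat.lt_succ_iff.mp (Finset.mem_range.mp hk)
  have e1 : m + 1 - (k + 1) = m - k := by omega
  have e2 : m + 1 - k = (m - k) + 1 := by omega
  have hpk : pp q (k + 1) = pp q k * (1 + q ^ k) := Finset.prod_range_succ _ _
  have hpm : pp q ((m - k) + 1) = pp q (m - k) * (1 + q ^ (m - k)) :=
    Finset.prod_range_succ _ _
  have hfk : qfact q (k + 1) = qfact q k * qnum q (k + 1) := Finset.prod_range_succ _ _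
  have hfm : qfact q ((m - k) + 1) = qfact q (m - k) * qnum q ((m - k) + 1) :=
    Finset.prod_range_succ _ _
  have hqm : q ^ k * q ^ (m - k) = q ^ m := by
    rw [← pow_add, Nat.add_sub_cancel' hk']
  rw [hA, hB]
  simp only [e1, e2]
  rw [hpk, hpm, hfk, hfm, ← hqm]
  have h1 := qfact_ne hq k
  have h2 := qfact_ne hq (m - k)
  have h3 := qnum_ne hq k
  have h4 := qnum_ne hq (m - k)
  field_simp
  ring

lemma Dsum_succ (hq : 0 < q) : ∀ n : ℕ, Dsum q (n + 1) = 0 := by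
  intro n
  induction n with
  | zero =>
    have h := key_rec hq 0
    have h1 : qnum q 1 = 1 := by simp [qnum]
    rw [h1, one_mul] at h
    simpa using h
  | succ n ih =>
    have h := key_rec hq (n + 1)
    rw [ih, mul_zero] at h
    exact (mul_eq_zero.mp h).resolve_left (qnum_ne hq (n + 1))

lemma sum_alt (hq : 0 < q) (hq1 : q ≠ 1) {n : ℕ} (hn : n ≠ 0) :
    ∑ k ∈ Finset.range (n + 1),
      (-1 : ℝ) ^ k * ((qBraceFact q k)⁻¹ * (qBraceFact q (n - k))⁻¹) = 0 := by
  have heq : ∑ k ∈ Finset.range (n + 1),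
      (-1 : ℝ) ^ k * ((qBraceFact q k)⁻¹ * (qBraceFact q (n - k))⁻¹)
      = ((2 : ℝ) ^ n)⁻¹ * Dsum q n := by
    rw [Dsum, Finset.mul_sum]
    refine Finset.sum_congr rfl fun k hk => ?_
    have hk' : k ≤ n := Nat.lt_succ_iff.mp (Finset.mem_range.mp hk)
    rw [braceFact_eq hq hq1, braceFact_eq hq hq1]
    have h2 : (2 : ℝ) ^ k * 2 ^ (n - k) = 2 ^ n := by
      rw [← pow_add, Nat.add_sub_cancel' hk']
    rw [← h2]
    have ha := qfact_ne hq k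
    have hb := qfact_ne hq (n - k)
    have hc := pp_ne hq k
    have hd := pp_ne hq (n - k)
    have h2k : (2 : ℝ) ^ k ≠ 0 := by positivity
    have h2nk : (2 : ℝ) ^ (n - k) ≠ 0 := by positivity
    field_simp
  obtain ⟨m, rfl⟩ := Nat.exists_eq_succ_of_ne_zero hn
  rw [heq, Dsum_succ hq, mul_zero]

end ImpPyth

namespace ImpPyth

variable {q : ℝ}

lemma Rq_pos (hq : 0 < q) (hq1 : q ≠ 1) : 0 < Rq q := by
  rw [Rq]
  split_ifs with h
  · have h1 : (0:ℝ) < 1 - q := by linarith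
    positivity
  · have h1 : 1 < q := lt_of_le_of_ne (not_lt.mp h) (Ne.symm hq1)
    have h2 : (0:ℝ) < q - 1 := by linarith
    positivity

lemma tendsto_qBrace (hq : 0 < q) (hq1 : q ≠ 1) :
    Filter.Tendsto (fun n => qBrace q (n + 1)) Filter.atTop (nhds (Rq q)) := by
  rcases lt_or_gt_of_ne hq1 with hlt | hgt
  · have h0 : Filter.Tendsto (fun n : ℕ => q ^ n) Filter.atTop (nhds 0) :=
      tendsto_pow_atTop_nhds_zero_of_lt_one hq.le hlt
    have heq : ∀ n : ℕ, qBrace q (n + 1) = 2 * (1 - q ^ n * q) / ((1 - q) * (1 + q ^ n)) := by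
      intro n
      rw [qBrace, show n + 1 - 1 = n from rfl, pow_succ]
    have hden : Filter.Tendsto (fun n : ℕ => (1 - q) * (1 + q ^ n)) Filter.atTop
        (nhds ((1 - q) * (1 + 0))) :=
      Filter.Tendsto.const_mul _ (Filter.Tendsto.const_add _ h0)
    have hnum : Filter.Tendsto (fun n : ℕ => 2 * (1 - q ^ n * q)) Filter.atTop
        (nhds (2 * (1 - 0 * q))) :=
      Filter.Tendsto.const_mul _ (Filter.Tendsto.const_sub _ (h0.mul_const q))
    have hne : (1 - q) * (1 + 0) ≠ 0 := by
      have : (0:ℝ) < 1 - q := by linarith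
      simp; linarith
    have htend := hnum.div hden hne
    have hval : 2 * (1 - 0 * q) / ((1 - q) * (1 + 0)) = Rq q := by
      rw [Rq, if_pos hlt]; norm_num
    rw [hval] at htend
    exact htend.congr fun n => (heq n).symm
  · have hqi : q⁻¹ < 1 := inv_lt_one_of_one_lt₀ hgt
    have h0 : Filter.Tendsto (fun n : ℕ => (q⁻¹) ^ n) Filter.atTop (nhds 0) :=
      tendsto_pow_atTop_nhds_zero_of_lt_one (by positivity) hqi
    have h1q : (1:ℝ) - q ≠ 0 := sub_ne_zero.mpr (Ne.symm hq1)
    have heq : ∀ n : ℕ, qBrace q (n + 1) = 2 * ((q⁻¹) ^ n - q) / ((1 - q) * ((q⁻¹) ^ n + 1)) := by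
      intro n
      have hip : (0:ℝ) < (q⁻¹) ^ n := by positivity
      have hinv : (q⁻¹) ^ n * q ^ n = 1 := by
        rw [← mul_pow, inv_mul_cancel₀ hq.ne', one_pow]
      rw [qBrace, show n + 1 - 1 = n from rfl, div_eq_div_iff]
      · rw [pow_succ]
        linear_combination (2 * (q ^ 2 - 1)) * hinv
      · exact mul_ne_zero h1q (by positivity)
      · exact mul_ne_zero h1q (by positivity)
    have hden : Filter.Tendsto (fun n : ℕ => (1 - q) * ((q⁻¹) ^ n + 1)) Filter.atTop
        (nhds ((1 - q) * (0 + 1))) :=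
      Filter.Tendsto.const_mul _ (h0.add_const 1)
    have hnum : Filter.Tendsto (fun n : ℕ => 2 * ((q⁻¹) ^ n - q)) Filter.atTop
        (nhds (2 * (0 - q))) :=
      Filter.Tendsto.const_mul _ (h0.sub_const q)
    have hne : (1 - q) * (0 + 1) ≠ 0 := by simpa using h1q
    have htend := hnum.div hden hne
    have hval : 2 * (0 - q) / ((1 - q) * (0 + 1)) = Rq q := by
      rw [Rq, if_neg (not_lt.mpr hgt.le)]
      rw [div_eq_div_iff (by simpa using h1q) (sub_ne_zero.mpr (ne_of_gt hgt))]
      ring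
    rw [hval] at htend
    exact htend.congr fun n => (heq n).symm

lemma summable_norm_impExp (hq : 0 < q) (hq1 : q ≠ 1) {z : ℂ} (hz : ‖z‖ < Rq q) :
    Summable (fun n : ℕ => ‖z ^ n / (qBraceFact q n : ℂ)‖) := by
  have hRpos := Rq_pos hq hq1
  set R := Rq q with hR
  set r : ℝ := (‖z‖ / R + 1) / 2 with hr
  have hz0 : 0 ≤ ‖z‖ := norm_nonneg z
  have hzR : ‖z‖ / R < 1 := (div_lt_one hRpos).mpr hz
  have hzR0 : 0 ≤ ‖z‖ / R := by positivity
  have hr1 : r < 1 := by rw [hr]; linarith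
  have hrpos : 0 < r := by rw [hr]; linarith
  have hkey : ‖z‖ / r < R := by
    rw [div_lt_iff₀ hrpos, hr]
    have hmul : R * (‖z‖ / R) = ‖z‖ := mul_div_cancel₀ _ hRpos.ne'
    nlinarith
  have hev : ∀ᶠ n in Filter.atTop, ‖z‖ / r < qBrace q (n + 1) :=
    (tendsto_qBrace hq hq1).eventually (eventually_gt_nhds hkey)
  have hnorm : ∀ m : ℕ, ‖z ^ m / (qBraceFact q m : ℂ)‖ = ‖z‖ ^ m / qBraceFact q m := by
    intro m
    rw [norm_div, norm_pow, Complex.norm_real, Real.norm_eq_abs,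
      abs_of_pos (braceFact_pos hq hq1 m)]
  apply summable_of_ratio_norm_eventually_le hr1
  filter_upwards [hev] with n hn
  have hb : 0 < qBrace q (n + 1) := lt_of_le_of_lt (by positivity) hn
  have hFn := braceFact_pos hq hq1 n
  have hFsucc : qBraceFact q (n + 1) = qBraceFact q n * qBrace q (n + 1) :=
    Finset.prod_range_succ _ _
  have hzr : ‖z‖ < qBrace q (n + 1) * r := (div_lt_iff₀ hrpos).mp hn
  rw [Real.norm_eq_abs, Real.norm_eq_abs, abs_of_nonneg (norm_nonneg _),
    abs_of_nonneg (norm_nonneg _), hnorm, hnorm, hFsucc]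
  rw [div_le_iff₀ (by positivity), mul_comm r, mul_assoc, div_mul_eq_mul_div,
    le_div_iff₀ hFn]
  have hzn : (0:ℝ) ≤ ‖z‖ ^ n := by positivity
  rw [pow_succ]
  nlinarith [mul_nonneg hzn hFn.le]

lemma impExp_mul_aux (hq : 0 < q) (hq1 : q ≠ 1) {z : ℂ} (hz : ‖z‖ < Rq q) :
    (∑' n : ℕ, z ^ n / (qBraceFact q n : ℂ)) * (∑' n : ℕ, (-z) ^ n / (qBraceFact q n : ℂ)) = 1 := by
  have h1 := summable_norm_impExp hq hq1 hz
  have h2 : Summable fun n : ℕ => ‖(-z) ^ n / (qBraceFact q n : ℂ)‖ := by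
    have hfun : (fun n : ℕ => ‖(-z) ^ n / (qBraceFact q n : ℂ)‖)
        = fun n : ℕ => ‖z ^ n / (qBraceFact q n : ℂ)‖ := by
      funext n
      rw [norm_div, norm_div, norm_pow, norm_pow, norm_neg]
    rw [hfun]; exact h1
  rw [tsum_mul_tsum_eq_tsum_sum_antidiagonal_of_summable_norm h1 h2]
  rw [tsum_eq_single 0]
  · simp [qBraceFact]
  · intro n hn
    rw [Finset.Nat.sum_antidiagonal_eq_sum_range_succ_mk]
    have hreal := sum_alt hq hq1 hn
    have hstep : ∑ k ∈ Finset.range (n + 1),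
        (z ^ k / (qBraceFact q k : ℂ) * ((-z) ^ (n - k) / (qBraceFact q (n - k) : ℂ)))
        = ((-1) ^ n * z ^ n) * ∑ k ∈ Finset.range (n + 1),
          ((-1 : ℂ) ^ k * (((qBraceFact q k : ℂ))⁻¹ * ((qBraceFact q (n - k) : ℂ))⁻¹)) := by
      rw [Finset.mul_sum]
      refine Finset.sum_congr rfl fun k hk => ?_
      have hk' : k ≤ n := Nat.lt_succ_iff.mp (Finset.mem_range.mp hk)
      have hzz : z ^ k * z ^ (n - k) = z ^ n := by
        rw [← pow_add, Nat.add_sub_cancel' hk']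
      have hs : (-1 : ℂ) ^ (n - k) * (-1 : ℂ) ^ k = (-1) ^ n := by
        rw [← pow_add, Nat.sub_add_cancel hk']
      have hk2 : (-1 : ℂ) ^ k * (-1) ^ k = 1 := by
        rw [← mul_pow]; norm_num
      have e0 : (-1 : ℂ) ^ (n - k) = (-1) ^ n * (-1) ^ k := by
        calc (-1 : ℂ) ^ (n - k) = (-1) ^ (n - k) * ((-1) ^ k * (-1) ^ k) := by
              rw [hk2, mul_one]
          _ = ((-1) ^ (n - k) * (-1) ^ k) * (-1) ^ k := by ring
          _ = (-1) ^ n * (-1) ^ k := by rw [hs]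
      rw [neg_pow, e0]
      linear_combination ((-1 : ℂ) ^ n * (-1 : ℂ) ^ k * ((qBraceFact q k : ℂ))⁻¹ *
        ((qBraceFact q (n - k) : ℂ))⁻¹) * hzz
    rw [hstep]
    have hcast : ∑ k ∈ Finset.range (n + 1),
        ((-1 : ℂ) ^ k * (((qBraceFact q k : ℂ))⁻¹ * ((qBraceFact q (n - k) : ℂ))⁻¹)) = 0 := by
      exact_mod_cast congrArg (Complex.ofReal) hreal
    rw [hcast, mul_zero]

end ImpPyth

/-- Pythagorean identity: `Cos_q(x)² + Sin_q(x)² = 1` for real `x` with `|x| < R_q`. -/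
theorem impCos_sq_add_impSin_sq (q : ℝ) (hq : 0 < q) (hq1 : q ≠ 1) (x : ℝ)
    (hx : |x| < Rq q) : (impCos q x) ^ 2 + (impSin q x) ^ 2 = 1 := by
  have hz : ‖Complex.I * (x : ℂ)‖ < Rq q := by
    rw [norm_mul, Complex.norm_I, one_mul, Complex.norm_real, Real.norm_eq_abs]
    exact hx
  have h : impExp q (Complex.I * x) * impExp q (-(Complex.I * x)) = 1 := by
    rw [impExp, impExp]
    exact ImpPyth.impExp_mul_aux hq hq1 hz
  rw [impCos, impSin]
  set a := impExp q (Complex.I * x)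
  set b := impExp q (-(Complex.I * x))
  have h2 : ((a - b) / (2 * Complex.I)) ^ 2 = -((a - b) ^ 2 / 4) := by
    rw [div_pow, mul_pow, Complex.I_sq]
    ring
  rw [h2]
  linear_combination h
end
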